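/- For all real numbers a, b, c, ρ, θ and every w ≠ 0, setting x₀ = ρ(sin(w+θ) − sin θ)/w and y₀ = −ρ(cos(w+θ) − cos θ)/w, one has: a·x₀² + 2b·x₀y₀ + c·y₀² = (2ρ² sin²(w/2)/w²)·((a+c) + (a−c)cos(2θ+w) + 2b sin(2θ+w)). -/

import Mathlib

open Real

/-- The quadratic form `a x² + 2b xy + c y²` along the Heisenberg exponential map:
isolation of the rotation-invariant part `(a + c)` from the oscillating part
(equation (3.16) in the proof of Theorem 1.1). -/
theorem stmt10 : ∀ a b c ρ θ : ℝ, ∀ w : ℝ, w ≠ 0 →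
    (fun x₀ y₀ : ℝ => a * x₀ ^ 2 + 2 * b * x₀ * y₀ + c * y₀ ^ 2)
        (ρ * (sin (w + θ) - sin θ) / w) (-(ρ * (cos (w + θ) - cos θ)) / w)
      = (2 * ρ ^ 2 * sin (w / 2) ^ 2 / w ^ 2) *
          ((a + c) + (a - c) * cos (2 * θ + w) + 2 * b * sin (2 * θ + w)) := by
  intro a b c ρ θ w hw
  simp only
  rw [sin_sub_sin, cos_sub_cos]
  have h1 : (w + θ - θ) / 2 = w / 2 := by ring
  have h2 : (w + θ + θ) / 2 = θ + w / 2 := by ring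
  have h3 : 2 * θ + w = 2 * (θ + w / 2) := by ring
  rw [h1, h2, h3, cos_two_mul, sin_two_mul]
  have hp := sin_sq_add_cos_sq ((θ * 2 + w) / 2)
  field_simp
  linear_combination (2 * c * ρ ^ 2 * sin (w / 2) ^ 2) * sin_sq_add_cos_sq ((2 * θ + w) / 2)
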